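/- Let X be a real Banach space and let c ≥ 1. If X is c-Schur, then X has the c-strong Schur property. -/

import Mathlib

open scoped BigOperators
open Filter

/-- `ca` of a real sequence: `inf_n sup {|t_k - t_l| : k, l ≥ n}`. -/
noncomputable def caSeqR (t : ℕ → ℝ) : ℝ :=
  sInf {s | ∃ n : ℕ, s = sSup {u | ∃ k, n ≤ k ∧ ∃ l, n ≤ l ∧ u = |t k - t l|}}

/-- `ca` of a sequence in a normed space: `inf_n diam {x_k : k ≥ n}`. -/
noncomputable def caSeq {X : Type*} [NormedAddCommGroup X] (x : ℕ → X) : ℝ :=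
  sInf {s | ∃ n : ℕ, s = Metric.diam (x '' Set.Ici n)}

/-- `de` of a sequence: `sup {ca((x*(x_n))_n) : x* ∈ B_{X*}}`. -/
noncomputable def deSeq {X : Type*} [NormedAddCommGroup X] [NormedSpace ℝ X]
    (x : ℕ → X) : ℝ :=
  sSup {t | ∃ φ : X →L[ℝ] ℝ, ‖φ‖ ≤ 1 ∧ t = caSeqR fun n => φ (x n)}

/-- `wca(x_n) = inf {ca((x_{n_k})_k) : (n_k) strictly increasing}`. -/
noncomputable def wcaSeq {X : Type*} [NormedAddCommGroup X] (x : ℕ → X) : ℝ :=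
  sInf {t | ∃ n : ℕ → ℕ, StrictMono n ∧ t = caSeq (x ∘ n)}

/-- `wde(x_n) = inf {de((x_{n_k})_k) : (n_k) strictly increasing}`. -/
noncomputable def wdeSeq {X : Type*} [NormedAddCommGroup X] [NormedSpace ℝ X]
    (x : ℕ → X) : ℝ :=
  sInf {t | ∃ n : ℕ → ℕ, StrictMono n ∧ t = deSeq (x ∘ n)}

/-- A real normed space is `c`-Schur if `ca(x_n) ≤ c · de(x_n)` for every bounded
sequence `(x_n)`. -/
def IsCSchur (X : Type*) [NormedAddCommGroup X] [NormedSpace ℝ X] (c : ℝ) : Prop :=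
  ∀ x : ℕ → X, (∃ C : ℝ, ∀ n, ‖x n‖ ≤ C) → caSeq x ≤ c * deSeq x

/-- A real normed space has the `c`-strong Schur property if every normalized
`δ`-separated sequence admits a subsequence `(2c/δ + ε)`-equivalent to the unit
vector basis of `ℓ¹`. -/
def HasCStrongSchur (X : Type*) [NormedAddCommGroup X] [NormedSpace ℝ X] (c : ℝ) : Prop :=
  ∀ δ : ℝ, 0 < δ → δ ≤ 2 → ∀ ε : ℝ, 0 < ε → ∀ x : ℕ → X,
    (∀ n, ‖x n‖ = 1) → (∀ n m, n ≠ m → δ ≤ ‖x n - x m‖) →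
    ∃ n : ℕ → ℕ, StrictMono n ∧ ∀ (N : ℕ) (a : ℕ → ℝ),
      (2 * c / δ + ε)⁻¹ * ∑ k ∈ Finset.range N, |a k| ≤
        ‖∑ k ∈ Finset.range N, a k • x (n k)‖

/- ### Auxiliary lemmas -/

lemma aux_infinite_of_unbounded {S : Set ℕ} (h : ∀ b : ℕ, ∃ a ∈ S, b < a) : S.Infinite := by
  intro hfin
  obtain ⟨B, hB⟩ := hfin.bddAbove
  obtain ⟨a, haS, hab⟩ := h B
  exact absurd (hB haS) (not_le.2 hab)

lemma aux_exists_gt_of_infinite {S : Set ℕ} (h : S.Infinite) (b : ℕ) : ∃ a ∈ S, b < a := by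
  by_contra hcon
  push_neg at hcon
  exact h (Set.Finite.subset (Set.finite_Iic b) (fun a ha => hcon a ha))

lemma aux_exists_strictMono_mem {M : Set ℕ} (hM : M.Infinite) :
    ∃ f : ℕ → ℕ, StrictMono f ∧ ∀ k, f k ∈ M := by
  choose g hg1 hg2 using fun a => aux_exists_gt_of_infinite hM a
  let f : ℕ → ℕ := fun k => Nat.rec (g 0) (fun _ prev => g prev) k
  refine ⟨f, strictMono_nat_of_lt_succ (fun n => ?_), fun k => ?_⟩
  · exact hg2 (f n)
  · cases k with
    | zero => exact hg1 0
    | succ n => exact hg1 (f n)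

lemma aux_exists_infinite_fiber {α : Type*} [DecidableEq α] {g : ℕ → α} {V : Finset α}
    (hg : ∀ i, g i ∈ V) : ∃ v ∈ V, {i | g i = v}.Infinite := by
  by_contra hcon
  push_neg at hcon
  have hsub : (Set.univ : Set ℕ) ⊆ ⋃ v ∈ V, {i | g i = v} := by
    intro i _; exact Set.mem_biUnion (hg i) rfl
  have hfin : (Set.univ : Set ℕ).Finite :=
    Set.Finite.subset (Set.Finite.biUnion V.finite_toSet
      (fun v hv => hcon v hv)) hsub
  exact Set.infinite_univ hfin

section AuxCombin

variable {Φ : Type*}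

/-- `φ` takes "high" values infinitely often on `M` and "low" values infinitely often. -/
def AuxBiInfinite (Hi Lo : ℕ → Φ → Prop) (φ : Φ) (M : Set ℕ) : Prop :=
  {k | k ∈ M ∧ Hi k φ}.Infinite ∧ {k | k ∈ M ∧ Lo k φ}.Infinite

/-- The pattern `(F, G)` is "large" on `M`. -/
def AuxLargeOn (Hi Lo : ℕ → Φ → Prop) (F G : Finset ℕ) (M : Set ℕ) : Prop :=
  ∀ M' : Set ℕ, M' ⊆ M → M'.Infinite →
    ∃ φ : Φ, (∀ k ∈ F, Hi k φ) ∧ (∀ k ∈ G, Lo k φ) ∧ AuxBiInfinite Hi Lo φ M'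

/-- Every two-sided partition pattern of `s` is large on `M`. -/
def AuxGoodOn (Hi Lo : ℕ → Φ → Prop) (s : Finset ℕ) (M : Set ℕ) : Prop :=
  M.Infinite ∧ ∀ F G : Finset ℕ, F ∪ G = s → Disjoint F G → AuxLargeOn Hi Lo F G M

/-- The key combinatorial extension step (a Rosenthal-type diagonal argument). -/
lemma auxGoodOn_extend {Hi Lo : ℕ → Φ → Prop} {s : Finset ℕ} {M : Set ℕ} {b : ℕ}
    (hG : AuxGoodOn Hi Lo s M) (hs : ∀ k ∈ s, k ≤ b) :
    ∃ n', b < n' ∧ ∃ M', M' ⊆ M ∧ AuxGoodOn Hi Lo (insert n' s) M' := by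
  classical
  by_contra hcon
  push_neg at hcon
  have hMinf := hG.1
  -- one step of the diagonal construction
  have step : ∀ (aPrev : ℕ) (W : Set ℕ), W ⊆ M → W.Infinite →
      ∃ n' W', aPrev < n' ∧ n' ∈ W ∧ W' ⊆ W ∧ W'.Infinite ∧
        ∃ F G, F ∪ G = s ∧ Disjoint F G ∧ ∃ τ : Bool,
          ∀ φ : Φ, (∀ k ∈ F, Hi k φ) → (∀ k ∈ G, Lo k φ) →
            (cond τ (Hi n' φ) (Lo n' φ)) → ¬ AuxBiInfinite Hi Lo φ W' := by
    intro aPrev W hWM hWinf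
    obtain ⟨n', hn'W, hn'gt⟩ := aux_exists_gt_of_infinite hWinf (max b aPrev)
    have hbn : b < n' := lt_of_le_of_lt (le_max_left _ _) hn'gt
    have haPn : aPrev < n' := lt_of_le_of_lt (le_max_right _ _) hn'gt
    have hnotG := hcon n' hbn W hWM
    rw [AuxGoodOn] at hnotG
    push_neg at hnotG
    obtain ⟨F', G', hu, hd, hnotL⟩ := hnotG hWinf
    rw [AuxLargeOn] at hnotL
    push_neg at hnotL
    obtain ⟨W', hW'W, hW'inf, hdead⟩ := hnotL
    have hn's : n' ∉ s := fun hmem => absurd (hs n' hmem) (not_le.2 hbn)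
    have hn'FG : n' ∈ F' ∪ G' := by rw [hu]; exact Finset.mem_insert_self _ _
    rcases Finset.mem_union.mp hn'FG with hF' | hG'
    · refine ⟨n', W', haPn, hn'W, hW'W, hW'inf, F'.erase n', G', ?_, ?_, true, ?_⟩
      · have hng : n' ∉ G' := Finset.disjoint_left.mp hd hF'
        have h2 : (F' ∪ G').erase n' = s := by rw [hu, Finset.erase_insert hn's]
        rw [← h2, Finset.erase_union_distrib, Finset.erase_eq_of_notMem hng]
      · exact hd.mono (Finset.erase_subset _ _) le_rfl
      · intro φ hF hGc hHin hBi
        refine hdead φ ?_ hGc hBi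
        intro k hk
        by_cases hkn : k = n'
        · subst hkn; exact hHin
        · exact hF k (Finset.mem_erase.2 ⟨hkn, hk⟩)
    · refine ⟨n', W', haPn, hn'W, hW'W, hW'inf, F', G'.erase n', ?_, ?_, false, ?_⟩
      · have hnf : n' ∉ F' := Finset.disjoint_right.mp hd hG'
        have h2 : (F' ∪ G').erase n' = s := by rw [hu, Finset.erase_insert hn's]
        rw [← h2, Finset.erase_union_distrib, Finset.erase_eq_of_notMem hnf]
      · exact hd.mono le_rfl (Finset.erase_subset _ _)
      · intro φ hF hGc hLon hBi
        refine hdead φ hF ?_ hBi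
        intro k hk
        by_cases hkn : k = n'
        · subst hkn; exact hLon
        · exact hGc k (Finset.mem_erase.2 ⟨hkn, hk⟩)
  -- the chain
  have stepT : ∀ p : {p : ℕ × Set ℕ // p.2 ⊆ M ∧ p.2.Infinite},
      ∃ q : {p : ℕ × Set ℕ // p.2 ⊆ M ∧ p.2.Infinite},
        p.1.1 < q.1.1 ∧ q.1.1 ∈ p.1.2 ∧ q.1.2 ⊆ p.1.2 ∧
        ∃ F G, F ∪ G = s ∧ Disjoint F G ∧ ∃ τ : Bool,
          ∀ φ : Φ, (∀ k ∈ F, Hi k φ) → (∀ k ∈ G, Lo k φ) →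
            (cond τ (Hi q.1.1 φ) (Lo q.1.1 φ)) → ¬ AuxBiInfinite Hi Lo φ q.1.2 := by
    rintro ⟨⟨aPrev, W⟩, hWM, hWinf⟩
    obtain ⟨n', W', h1, h2, h3, h4, hrest⟩ := step aPrev W hWM hWinf
    exact ⟨⟨(n', W'), h3.trans hWM, h4⟩, h1, h2, h3, hrest⟩
  choose nxt hlt hmem hsub Fd Gd hFGu hFGd τd hDead using stepT
  set ch : ℕ → {p : ℕ × Set ℕ // p.2 ⊆ M ∧ p.2.Infinite} :=
    fun i => nxt^[i] ⟨(b, M), subset_rfl, hMinf⟩ with hch_def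
  have hch : ∀ i, ch (i+1) = nxt (ch i) := fun i => Function.iterate_succ_apply' _ _ _
  set nn : ℕ → ℕ := fun i => (ch (i+1)).1.1 with hnn_def
  set MM : ℕ → Set ℕ := fun i => (ch i).1.2 with hMM_def
  have hnnmono : StrictMono nn := by
    apply strictMono_nat_of_lt_succ
    intro k
    have h1 := hlt (ch (k+1))
    rw [← hch (k+1)] at h1
    exact h1
  have hnnMM : ∀ i, nn i ∈ MM i := by
    intro i
    have h1 := hmem (ch i)
    rw [← hch i] at h1
    exact h1
  have hMMsub : ∀ i, MM (i+1) ⊆ MM i := by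
    intro i
    have h1 := hsub (ch i)
    rw [← hch i] at h1
    exact h1
  have hMManti : ∀ i j, i ≤ j → MM j ⊆ MM i := by
    intro i j hij
    induction j, hij using Nat.le_induction with
    | base => exact subset_rfl
    | succ j hij ih => exact (hMMsub j).trans ih
  have hMMM : ∀ i, MM i ⊆ M := fun i => (ch i).2.1
  have hDead' : ∀ i, ∀ φ : Φ, (∀ k ∈ Fd (ch i), Hi k φ) → (∀ k ∈ Gd (ch i), Lo k φ) →
      (cond (τd (ch i)) (Hi (nn i) φ) (Lo (nn i) φ)) → ¬ AuxBiInfinite Hi Lo φ (MM (i+1)) := by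
    intro i
    have h1 := hDead (ch i)
    rw [← hch i] at h1
    exact h1
  have hFGu' : ∀ i, Fd (ch i) ∪ Gd (ch i) = s := fun i => hFGu (ch i)
  have hFGd' : ∀ i, Disjoint (Fd (ch i)) (Gd (ch i)) := fun i => hFGd (ch i)
  -- pigeonhole on (F, τ)
  obtain ⟨⟨F, τ⟩, hFV, hIinf⟩ := aux_exists_infinite_fiber
    (g := fun i => (Fd (ch i), τd (ch i)))
    (V := s.powerset ×ˢ ({true, false} : Finset Bool))
    (by
      intro i
      refine Finset.mem_product.2 ⟨Finset.mem_powerset.2 ?_, ?_⟩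
      · rw [← hFGu' i]; exact Finset.subset_union_left
      · cases τd (ch i) <;> simp)
  set I : Set ℕ := {i | (Fd (ch i), τd (ch i)) = (F, τ)} with hI_def
  have hIF : ∀ i ∈ I, Fd (ch i) = F := by
    intro i hi
    have hi' : (Fd (ch i), τd (ch i)) = (F, τ) := hi
    exact (Prod.ext_iff.mp hi').1
  have hIτ : ∀ i ∈ I, τd (ch i) = τ := by
    intro i hi
    have hi' : (Fd (ch i), τd (ch i)) = (F, τ) := hi
    exact (Prod.ext_iff.mp hi').2
  have hIG : ∀ i ∈ I, Gd (ch i) = s \ F := by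
    intro i hi
    have h1 := hFGu' i
    have h2 := hFGd' i
    rw [hIF i hi] at h1 h2
    rw [← h1, Finset.union_sdiff_cancel_left h2]
  have hFs : F ⊆ s := by
    obtain ⟨i, hi⟩ := hIinf.nonempty
    rw [← hIF i hi, ← hFGu' i]; exact Finset.subset_union_left
  set E : Set ℕ := {v | ∃ i, i ∈ I ∧ nn i = v} with hE_def
  have hEM : E ⊆ M := by rintro v ⟨i, _, rfl⟩; exact hMMM i (hnnMM i)
  have hEinf : E.Infinite := by
    apply aux_infinite_of_unbounded
    intro bnd
    obtain ⟨i, hiI, hibnd⟩ := aux_exists_gt_of_infinite hIinf bnd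
    exact ⟨nn i, ⟨i, hiI, rfl⟩, lt_of_lt_of_le hibnd (hnnmono.le_apply)⟩
  obtain ⟨φ, hφF, hφG, hBi⟩ := hG.2 F (s \ F) (Finset.union_sdiff_of_subset hFs)
    (Finset.disjoint_sdiff) E hEM hEinf
  have hbi_to : ∀ i₀, AuxBiInfinite Hi Lo φ (MM (i₀+1)) := by
    intro i₀
    constructor
    · refine Set.Infinite.mono ?_ ((hBi.1).diff (Set.finite_Iic (nn i₀)))
      rintro v ⟨⟨⟨i, hiI, rfl⟩, hHi⟩, hgt⟩
      have hgt' : nn i₀ < nn i := by simpa using hgt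
      have hii : i₀ < i := hnnmono.lt_iff_lt.mp hgt'
      exact ⟨hMManti (i₀+1) i hii (hnnMM i), hHi⟩
    · refine Set.Infinite.mono ?_ ((hBi.2).diff (Set.finite_Iic (nn i₀)))
      rintro v ⟨⟨⟨i, hiI, rfl⟩, hLo⟩, hgt⟩
      have hgt' : nn i₀ < nn i := by simpa using hgt
      have hii : i₀ < i := hnnmono.lt_iff_lt.mp hgt'
      exact ⟨hMManti (i₀+1) i hii (hnnMM i), hLo⟩
  cases τ with
  | true =>
    obtain ⟨v₀, ⟨i₀, hi₀I, rfl⟩, hHiv⟩ := hBi.1.nonempty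
    refine hDead' i₀ φ ?_ ?_ ?_ (hbi_to i₀)
    · rw [hIF i₀ hi₀I]; exact hφF
    · rw [hIG i₀ hi₀I]; exact hφG
    · rw [hIτ i₀ hi₀I]; exact hHiv
  | false =>
    obtain ⟨v₀, ⟨i₀, hi₀I, rfl⟩, hLov⟩ := hBi.2.nonempty
    refine hDead' i₀ φ ?_ ?_ ?_ (hbi_to i₀)
    · rw [hIF i₀ hi₀I]; exact hφF
    · rw [hIG i₀ hi₀I]; exact hφG
    · rw [hIτ i₀ hi₀I]; exact hLov

/-- Iterating the extension step produces a subsequence all of whose sign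
patterns are realized. -/
lemma auxCombinMain {Hi Lo : ℕ → Φ → Prop} {M₀ : Set ℕ}
    (h0 : AuxGoodOn Hi Lo ∅ M₀) :
    ∃ n : ℕ → ℕ, StrictMono n ∧ ∀ N : ℕ, ∀ F G : Finset ℕ,
      F ∪ G = (Finset.range N).image n → Disjoint F G →
      ∃ φ : Φ, (∀ k ∈ F, Hi k φ) ∧ (∀ k ∈ G, Lo k φ) := by
  classical
  have stepT : ∀ p : {p : ℕ × Finset ℕ × Set ℕ //
        AuxGoodOn Hi Lo p.2.1 p.2.2 ∧ ∀ k ∈ p.2.1, k ≤ p.1},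
      ∃ q : {p : ℕ × Finset ℕ × Set ℕ //
        AuxGoodOn Hi Lo p.2.1 p.2.2 ∧ ∀ k ∈ p.2.1, k ≤ p.1},
        p.1.1 < q.1.1 ∧ q.1.2.1 = insert q.1.1 p.1.2.1 := by
    rintro ⟨⟨bb, s, M⟩, hGp, hsp⟩
    obtain ⟨n', hbn', M', hM'M, hGood'⟩ := auxGoodOn_extend hGp hsp
    refine ⟨⟨(n', insert n' s, M'), hGood', ?_⟩, hbn', rfl⟩
    intro k hk
    rcases Finset.mem_insert.mp hk with rfl | hk
    · exact le_rfl
    · exact (hsp k hk).trans hbn'.le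
  choose nxt hlt hins using stepT
  set ch : ℕ → {p : ℕ × Finset ℕ × Set ℕ //
      AuxGoodOn Hi Lo p.2.1 p.2.2 ∧ ∀ k ∈ p.2.1, k ≤ p.1} :=
    fun i => nxt^[i] ⟨(0, ∅, M₀), h0, by simp⟩ with hch_def
  have hch : ∀ i, ch (i+1) = nxt (ch i) := fun i => Function.iterate_succ_apply' _ _ _
  set n : ℕ → ℕ := fun k => (ch (k+1)).1.1 with hn_def
  have hmono : StrictMono n := by
    apply strictMono_nat_of_lt_succ
    intro k
    have h1 := hlt (ch (k+1))
    rw [← hch (k+1)] at h1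
    exact h1
  have hs_eq : ∀ N, (ch N).1.2.1 = (Finset.range N).image n := by
    intro N
    induction N with
    | zero => simp [hch_def]
    | succ N ihN =>
      have h1 := hins (ch N)
      rw [← hch N] at h1
      rw [h1, ihN, Finset.range_add_one, Finset.image_insert]
  refine ⟨n, hmono, ?_⟩
  intro N F G hu hd
  have hGN := (ch N).2.1
  rw [hs_eq N] at hGN
  obtain ⟨φ, h1, h2, _⟩ := hGN.2 F G hu hd (ch N).1.2.2 subset_rfl hGN.1
  exact ⟨φ, h1, h2⟩

end AuxCombin

/-- Hereditary pigeonhole: if every infinite set satisfies one of finitely many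
monotone properties, some fixed property holds hereditarily on some infinite set. -/
lemma auxPigeonHered (P : ℕ → Set ℕ → Prop)
    (hmono : ∀ j (M' M : Set ℕ), M' ⊆ M → P j M' → P j M) :
    ∀ (J : ℕ) (M₀ : Set ℕ), M₀.Infinite →
      (∀ M : Set ℕ, M ⊆ M₀ → M.Infinite → ∃ j, j < J ∧ P j M) →
      ∃ j, j < J ∧ ∃ M₁, M₁ ⊆ M₀ ∧ M₁.Infinite ∧ ∀ M, M ⊆ M₁ → M.Infinite → P j M := by
  intro J
  induction J with
  | zero =>
    intro M₀ h0 h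
    obtain ⟨j, hj, _⟩ := h M₀ subset_rfl h0
    omega
  | succ J ih =>
    intro M₀ hM₀ h
    by_cases hcs : ∃ M₁, M₁ ⊆ M₀ ∧ M₁.Infinite ∧ ∀ M, M ⊆ M₁ → M.Infinite → P J M
    · obtain ⟨M₁, h1, h2, h3⟩ := hcs
      exact ⟨J, Nat.lt_succ_self J, M₁, h1, h2, h3⟩
    · push_neg at hcs
      obtain ⟨M₁, hsub, hinf, hnP⟩ := hcs M₀ subset_rfl hM₀
      have h' : ∀ M, M ⊆ M₁ → M.Infinite → ∃ j, j < J ∧ P j M := by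
        intro M hMs hMi
        obtain ⟨j, hj, hP⟩ := h M (hMs.trans hsub) hMi
        refine ⟨j, ?_, hP⟩
        rcases Nat.lt_succ_iff_lt_or_eq.mp hj with hlt | rfl
        · exact hlt
        · exact absurd (hmono j M M₁ hMs hP) hnP
      obtain ⟨j, hj, M₂, hs2, hi2, hP2⟩ := ih M₁ hinf h'
      exact ⟨j, Nat.lt_succ_of_lt hj, M₂, hs2.trans hsub, hi2, hP2⟩

set_option maxHeartbeats 2000000 in
/-- If a real Banach space is `c`-Schur, then it has the `c`-strong Schur property. -/
theorem hasCStrongSchur_of_isCSchur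
    (X : Type*) [NormedAddCommGroup X] [NormedSpace ℝ X] [CompleteSpace X]
    (c : ℝ) (hc : 1 ≤ c) (h : IsCSchur X c) :
    HasCStrongSchur X c := by
  intro δ hδ0 hδ2 ε hε x hx1 hsep
  classical
  have hc0 : (0:ℝ) < c := lt_of_lt_of_le one_pos hc
  set d : ℝ := δ / c with hd_def
  set θ : ℝ := (2 * c / δ + ε)⁻¹ with hθ_def
  have h2cδ : (0:ℝ) < 2 * c / δ := by positivity
  have hθ0 : (0:ℝ) < θ := by rw [hθ_def]; positivity
  have hθhalf : 2 * θ < d := by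
    have heq : (2 * c / δ)⁻¹ = d / 2 := by
      rw [hd_def, inv_div, div_div, mul_comm]
    have hθlt : θ < (2 * c / δ)⁻¹ := by
      rw [hθ_def]
      apply inv_strictAnti₀ h2cδ
      linarith
    rw [heq] at hθlt
    linarith
  set η : ℝ := (d - 2*θ)/2 with hη_def
  have hη0 : (0:ℝ) < η := by rw [hη_def]; linarith
  have hdηθ : d = 2*θ + 2*η := by rw [hη_def]; ring
  -- Step 1: persistent oscillation of some norm-one functional along any subsequence
  have hOsc : ∀ f : ℕ → ℕ, StrictMono f →
      ∃ φ : X →L[ℝ] ℝ, ‖φ‖ ≤ 1 ∧ ∀ N : ℕ, ∃ k l, N ≤ k ∧ N ≤ l ∧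
        d - η < φ (x (f k)) - φ (x (f l)) := by
    intro f hf
    have hca : δ ≤ caSeq (fun k => x (f k)) := by
      rw [caSeq]
      refine le_csInf ⟨Metric.diam ((fun k => x (f k)) '' Set.Ici 0), ⟨0, rfl⟩⟩ ?_
      rintro s ⟨N, rfl⟩
      have hbdd : Bornology.IsBounded ((fun k => x (f k)) '' Set.Ici N) := by
        apply Bornology.IsBounded.subset (Metric.isBounded_closedBall (x := (0:X)) (r := 1))
        rintro v ⟨k, _, rfl⟩
        simpa [Metric.mem_closedBall, dist_eq_norm] using (hx1 (f k)).le
      have h1 : x (f N) ∈ (fun k => x (f k)) '' Set.Ici N :=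
        Set.mem_image_of_mem _ Set.self_mem_Ici
      have h2 : x (f (N+1)) ∈ (fun k => x (f k)) '' Set.Ici N :=
        Set.mem_image_of_mem _ (by simp : N+1 ∈ Set.Ici N)
      have hne : f N ≠ f (N + 1) := ne_of_lt (hf (Nat.lt_succ_self N))
      calc δ ≤ ‖x (f N) - x (f (N+1))‖ := hsep _ _ hne
        _ = dist (x (f N)) (x (f (N+1))) := (dist_eq_norm _ _).symm
        _ ≤ Metric.diam ((fun k => x (f k)) '' Set.Ici N) :=
            Metric.dist_le_diam_of_mem hbdd h1 h2
    have hde : d ≤ deSeq (fun k => x (f k)) := by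
      have hcs := h (fun k => x (f k)) ⟨1, fun k => (hx1 (f k)).le⟩
      rw [hd_def, div_le_iff₀ hc0, mul_comm]
      exact le_trans hca hcs
    have hne : {t | ∃ φ : X →L[ℝ] ℝ, ‖φ‖ ≤ 1 ∧
        t = caSeqR fun n => φ (x (f n))}.Nonempty := ⟨_, 0, by simp, rfl⟩
    have hlt : d - η < deSeq (fun k => x (f k)) := lt_of_lt_of_le (by linarith) hde
    rw [deSeq] at hlt
    obtain ⟨t0, ⟨φ, hφ1, rfl⟩, hφgt⟩ := exists_lt_of_lt_csSup hne hlt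
    refine ⟨φ, hφ1, fun N => ?_⟩
    set t : ℕ → ℝ := fun k => φ (x (f k)) with ht_def
    have htb : ∀ k, |t k| ≤ 1 := by
      intro k
      calc |t k| = ‖φ (x (f k))‖ := (Real.norm_eq_abs _).symm
        _ ≤ ‖φ‖ * ‖x (f k)‖ := φ.le_opNorm _
        _ ≤ 1 := by rw [hx1]; simpa using hφ1
    have hmem0 : ∀ n : ℕ, (0:ℝ) ∈ {u | ∃ k, n ≤ k ∧ ∃ l, n ≤ l ∧ u = |t k - t l|} :=
      fun n => ⟨n, le_refl n, n, le_refl n, by simp⟩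
    have hbddA : ∀ n : ℕ, BddAbove {u | ∃ k, n ≤ k ∧ ∃ l, n ≤ l ∧ u = |t k - t l|} := by
      intro n
      refine ⟨2, ?_⟩
      rintro u ⟨k, _, l, _, rfl⟩
      have h1 : |t k - t l| ≤ |t k| + |t l| := abs_sub _ _
      have := htb k; have := htb l
      linarith
    have hbddB : BddBelow {s | ∃ n : ℕ,
        s = sSup {u | ∃ k, n ≤ k ∧ ∃ l, n ≤ l ∧ u = |t k - t l|}} := by
      refine ⟨0, ?_⟩
      rintro s ⟨n, rfl⟩
      exact le_csSup (hbddA n) (hmem0 n)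
    have hle : caSeqR t ≤ sSup {u | ∃ k, N ≤ k ∧ ∃ l, N ≤ l ∧ u = |t k - t l|} :=
      csInf_le hbddB ⟨N, rfl⟩
    have hgt2 : d - η < sSup {u | ∃ k, N ≤ k ∧ ∃ l, N ≤ l ∧ u = |t k - t l|} :=
      lt_of_lt_of_le hφgt hle
    obtain ⟨u, ⟨k, hk, l, hl, rfl⟩, hu⟩ := exists_lt_of_lt_csSup ⟨0, hmem0 N⟩ hgt2
    rcases lt_abs.mp hu with h1 | h1
    · exact ⟨k, l, hk, hl, h1⟩
    · exact ⟨l, k, hl, hk, by linarith⟩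
  set J : ℕ := ⌊4/η⌋₊ + 1 with hJ_def
  -- Step 2: grid pigeonhole — every infinite set is "alive" at some grid level
  have hAlive : ∀ M : Set ℕ, M.Infinite → ∃ j, j < J ∧ ∃ φ : X →L[ℝ] ℝ, ‖φ‖ ≤ 1 ∧
      {k | k ∈ M ∧ ((-1 + j*(η/2)) - θ - η/2) + θ ≤ φ (x k)}.Infinite ∧
      {k | k ∈ M ∧ φ (x k) ≤ ((-1 + j*(η/2)) - θ - η/2) - θ}.Infinite := by
    intro M hM
    obtain ⟨f, hf, hfM⟩ := aux_exists_strictMono_mem hM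
    obtain ⟨φ, hφ1, hp⟩ := hOsc f hf
    choose K L hK hL hKL using hp
    set t : ℕ → ℝ := fun k => φ (x (f k)) with ht_def
    have htb : ∀ k, |t k| ≤ 1 := by
      intro k
      calc |t k| = ‖φ (x (f k))‖ := (Real.norm_eq_abs _).symm
        _ ≤ ‖φ‖ * ‖x (f k)‖ := φ.le_opNorm _
        _ ≤ 1 := by rw [hx1]; simpa using hφ1
    set g : ℕ → ℕ := fun N => ⌊(t (K N) + 1)/(η/2)⌋₊ with hg_def
    have hgJ : ∀ N, g N ∈ Finset.range J := by
      intro N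
      simp only [Finset.mem_range, hJ_def]
      have h2 : (t (K N) + 1)/(η/2) ≤ 4/η := by
        rw [div_le_div_iff₀ (by linarith) (by linarith)]
        have := (abs_le.mp (htb (K N))).2
        nlinarith
      have h3 : g N ≤ ⌊(4:ℝ)/η⌋₊ := Nat.floor_le_floor h2
      omega
    obtain ⟨j, hjJ, hjinf⟩ := aux_exists_infinite_fiber (V := Finset.range J) hgJ
    refine ⟨j, Finset.mem_range.mp hjJ, φ, hφ1, ?_, ?_⟩
    · apply aux_infinite_of_unbounded
      intro b
      obtain ⟨N, hNI, hNb⟩ := aux_exists_gt_of_infinite hjinf b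
      have hjN : g N = j := hNI
      refine ⟨f (K N), ⟨hfM _, ?_⟩, ?_⟩
      · have h0 : (0:ℝ) ≤ t (K N) + 1 := by
          have := (abs_le.mp (htb (K N))).1; linarith
        have hfl : (j:ℝ) ≤ (t (K N) + 1)/(η/2) := by
          rw [← hjN, hg_def]
          exact Nat.floor_le (div_nonneg h0 (by linarith))
        have hfl2 : (j:ℝ) * (η/2) ≤ t (K N) + 1 := by
          calc (j:ℝ) * (η/2) ≤ ((t (K N) + 1)/(η/2)) * (η/2) :=
                mul_le_mul_of_nonneg_right hfl (by linarith)
            _ = t (K N) + 1 := div_mul_cancel₀ _ (by linarith)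
        show ((-1 + j*(η/2)) - θ - η/2) + θ ≤ φ (x (f (K N)))
        have hteq : φ (x (f (K N))) = t (K N) := rfl
        rw [hteq]
        linarith
      · calc b < N := hNb
          _ ≤ K N := hK N
          _ ≤ f (K N) := hf.le_apply
    · apply aux_infinite_of_unbounded
      intro b
      obtain ⟨N, hNI, hNb⟩ := aux_exists_gt_of_infinite hjinf b
      have hjN : g N = j := hNI
      refine ⟨f (L N), ⟨hfM _, ?_⟩, ?_⟩
      · have h0 : (0:ℝ) ≤ t (K N) + 1 := by
          have := (abs_le.mp (htb (K N))).1; linarith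
        have hub : (t (K N) + 1)/(η/2) < (j:ℝ) + 1 := by
          rw [← hjN, hg_def]
          exact Nat.lt_floor_add_one _
        have hub2 : t (K N) + 1 < ((j:ℝ) + 1) * (η/2) := by
          have hm := mul_lt_mul_of_pos_right hub (by linarith : (0:ℝ) < η/2)
          rwa [div_mul_cancel₀ _ (by linarith : (η:ℝ)/2 ≠ 0)] at hm
        have hKL' : d - η < t (K N) - t (L N) := hKL N
        have hexp : ((j:ℝ) + 1) * (η/2) = (j:ℝ)*(η/2) + η/2 := by ring
        show φ (x (f (L N))) ≤ ((-1 + j*(η/2)) - θ - η/2) - θ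
        have hteq : φ (x (f (L N))) = t (L N) := rfl
        rw [hteq]
        linarith
      · calc b < N := hNb
          _ ≤ L N := hL N
          _ ≤ f (L N) := hf.le_apply
  -- Step 3: hereditary pigeonhole fixes a single grid level
  obtain ⟨j, hjJ, M₀, hM₀u, hM₀inf, hHered⟩ := auxPigeonHered
    (fun j M => ∃ φ : X →L[ℝ] ℝ, ‖φ‖ ≤ 1 ∧
      {k | k ∈ M ∧ ((-1 + j*(η/2)) - θ - η/2) + θ ≤ φ (x k)}.Infinite ∧
      {k | k ∈ M ∧ φ (x k) ≤ ((-1 + j*(η/2)) - θ - η/2) - θ}.Infinite)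
    (by
      rintro j M' M hsub ⟨φ, h1, h2, h3⟩
      refine ⟨φ, h1, ?_, ?_⟩
      · exact h2.mono (fun k hk => ⟨hsub hk.1, hk.2⟩)
      · exact h3.mono (fun k hk => ⟨hsub hk.1, hk.2⟩))
    J Set.univ Set.infinite_univ (fun M _ hMi => hAlive M hMi)
  set m : ℝ := (-1 + j*(η/2)) - θ - η/2 with hm_def
  -- Step 4: combinatorial construction of the subsequence
  have hGood : AuxGoodOn (Φ := {ψ : X →L[ℝ] ℝ // ‖ψ‖ ≤ 1})
      (fun k ψ => m + θ ≤ ψ.1 (x k)) (fun k ψ => ψ.1 (x k) ≤ m - θ) ∅ M₀ := by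
    refine ⟨hM₀inf, ?_⟩
    intro F G hu hd M' hsub hinf
    have hFG := Finset.union_eq_empty.mp hu
    obtain ⟨φ, h1, h2, h3⟩ := hHered M' hsub hinf
    refine ⟨⟨φ, h1⟩, ?_, ?_, h2, h3⟩
    · intro k hk; exact absurd (hFG.1 ▸ hk) (Finset.notMem_empty k)
    · intro k hk; exact absurd (hFG.2 ▸ hk) (Finset.notMem_empty k)
  obtain ⟨n, hnmono, hpat⟩ := auxCombinMain hGood
  refine ⟨n, hnmono, ?_⟩
  intro N a
  -- Step 5: the ℓ¹ lower estimate
  set F : Finset ℕ := ((Finset.range N).filter (fun k => 0 ≤ a k)).image n with hF_def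
  set G : Finset ℕ := ((Finset.range N).filter (fun k => ¬ 0 ≤ a k)).image n with hG_def
  have hunion : F ∪ G = (Finset.range N).image n := by
    rw [hF_def, hG_def, ← Finset.image_union, Finset.filter_union_filter_not_eq]
  have hdisj : Disjoint F G := by
    rw [hF_def, hG_def]
    rw [Finset.disjoint_image hnmono.injective]
    exact Finset.disjoint_filter_filter_not _ _ _
  obtain ⟨φp, hpF, hpG⟩ := hpat N F G hunion hdisj
  obtain ⟨φm, hmG, hmF⟩ := hpat N G F (by rw [Finset.union_comm]; exact hunion) hdisj.symm
  set ψ : X →L[ℝ] ℝ := (2:ℝ)⁻¹ • (φp.1 - φm.1) with hψ_def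
  have hψapp : ∀ v : X, ψ v = (2:ℝ)⁻¹ * (φp.1 v - φm.1 v) := by
    intro v
    rw [hψ_def]
    simp [ContinuousLinearMap.smul_apply, ContinuousLinearMap.sub_apply, smul_eq_mul]
  have hψnorm : ‖ψ‖ ≤ 1 := by
    apply ContinuousLinearMap.opNorm_le_bound _ zero_le_one
    intro v
    rw [hψapp v, one_mul, Real.norm_eq_abs]
    have h1 : |φp.1 v| ≤ ‖v‖ := by
      rw [← Real.norm_eq_abs]
      calc ‖φp.1 v‖ ≤ ‖φp.1‖ * ‖v‖ := φp.1.le_opNorm v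
        _ ≤ 1 * ‖v‖ := mul_le_mul_of_nonneg_right φp.2 (norm_nonneg _)
        _ = ‖v‖ := one_mul _
    have h2 : |φm.1 v| ≤ ‖v‖ := by
      rw [← Real.norm_eq_abs]
      calc ‖φm.1 v‖ ≤ ‖φm.1‖ * ‖v‖ := φm.1.le_opNorm v
        _ ≤ 1 * ‖v‖ := mul_le_mul_of_nonneg_right φm.2 (norm_nonneg _)
        _ = ‖v‖ := one_mul _
    rw [abs_mul, abs_of_nonneg (by norm_num : (0:ℝ) ≤ (2:ℝ)⁻¹)]
    have h3 : |φp.1 v - φm.1 v| ≤ |φp.1 v| + |φm.1 v| := abs_sub _ _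
    linarith
  have hkey : ∀ k ∈ Finset.range N, θ * |a k| ≤ a k * ψ (x (n k)) := by
    intro k hk
    by_cases hak : 0 ≤ a k
    · have hmemF : n k ∈ F := Finset.mem_image_of_mem n (Finset.mem_filter.2 ⟨hk, hak⟩)
      have h1 : m + θ ≤ φp.1 (x (n k)) := hpF _ hmemF
      have h2 : φm.1 (x (n k)) ≤ m - θ := hmF _ hmemF
      have h3 : θ ≤ ψ (x (n k)) := by rw [hψapp]; linarith
      rw [abs_of_nonneg hak]
      nlinarith
    · have hmemG : n k ∈ G := Finset.mem_image_of_mem n (Finset.mem_filter.2 ⟨hk, hak⟩)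
      have h1 : φp.1 (x (n k)) ≤ m - θ := hpG _ hmemG
      have h2 : m + θ ≤ φm.1 (x (n k)) := hmG _ hmemG
      have h3 : ψ (x (n k)) ≤ -θ := by rw [hψapp]; linarith
      rw [abs_of_neg (not_le.mp hak)]
      nlinarith [not_le.mp hak]
  have hsum : ψ (∑ k ∈ Finset.range N, a k • x (n k))
      = ∑ k ∈ Finset.range N, a k * ψ (x (n k)) := by
    rw [map_sum]
    exact Finset.sum_congr rfl (fun k _ => by rw [map_smul, smul_eq_mul])
  calc θ * ∑ k ∈ Finset.range N, |a k| = ∑ k ∈ Finset.range N, θ * |a k| :=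
        Finset.mul_sum _ _ _
    _ ≤ ∑ k ∈ Finset.range N, a k * ψ (x (n k)) := Finset.sum_le_sum hkey
    _ = ψ (∑ k ∈ Finset.range N, a k • x (n k)) := hsum.symm
    _ ≤ |ψ (∑ k ∈ Finset.range N, a k • x (n k))| := le_abs_self _
    _ ≤ ‖ψ‖ * ‖∑ k ∈ Finset.range N, a k • x (n k)‖ := by
        rw [← Real.norm_eq_abs]; exact ψ.le_opNorm _
    _ ≤ 1 * ‖∑ k ∈ Finset.range N, a k • x (n k)‖ :=
        mul_le_mul_of_nonneg_right hψnorm (norm_nonneg _)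
    _ = ‖∑ k ∈ Finset.range N, a k • x (n k)‖ := one_mul _
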